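/- Let x₀ ∈ ℝ³, ε > 0, and let φ : ℝ³ → ℝ be measurable with 0 ≤ φ(x) ≤ 1 for all x and φ(x) = 0 whenever |x − x₀| ≥ 2. Define v_{ε,x₀}(x) = φ(x)·(3ε²)^{1/4}/(ε² + |x − x₀|²)^{1/2}. Then ∫_{ℝ³} v_{ε,x₀}(x)² dx ≤ 8√3·π·ε. -/

import Mathlib

open MeasureTheory Real

lemma vol_ball3 : (volume (Metric.ball (0 : EuclideanSpace ℝ (Fin 3)) 1)).toReal = 4 * π / 3 := by
  rw [EuclideanSpace.volume_ball]
  have h12 : Real.Gamma (1/2) = Real.sqrt π := Real.Gamma_one_half_eq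
  have h32 : Real.Gamma (3/2) = Real.sqrt π / 2 := by
    have h := Real.Gamma_add_one (s := 1/2) (by norm_num)
    rw [h12] at h
    norm_num at h ⊢
    linarith
  have hsp : (0:ℝ) < Real.sqrt π := Real.sqrt_pos.2 Real.pi_pos
  have h52 : Real.Gamma ((Fintype.card (Fin 3) : ℝ)/2 + 1) = 3 / 4 * Real.sqrt π := by
    simp only [Fintype.card_fin]
    have : ((3:ℕ):ℝ)/2 + 1 = 3/2 + 1 := by norm_num
    rw [this, Real.Gamma_add_one (by norm_num), h32]; ring
  rw [h52]
  have hsq : Real.sqrt π ^ 2 = π := Real.sq_sqrt Real.pi_pos.le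
  have hval : Real.sqrt π ^ Fintype.card (Fin 3) / (3 / 4 * Real.sqrt π) = 4 * π / 3 := by
    simp only [Fintype.card_fin]
    field_simp
    nlinarith [hsq]
  rw [hval]
  simp [ENNReal.toReal_ofReal (by positivity : (0:ℝ) ≤ 4 * π / 3)]

/-- `L²`-estimate for the cut-off Aubin–Talenti function: if `0 ≤ φ ≤ 1` vanishes outside
`B₂(x₀)` and `v(x) = φ(x) (3ε²)^{1/4}/(ε² + |x−x₀|²)^{1/2}`, then
`∫ v² ≤ 8√3 π ε`. -/
theorem cutoff_talenti_L2_estimate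
    (x₀ : EuclideanSpace ℝ (Fin 3)) (ε : ℝ) (hε : 0 < ε)
    (φ : EuclideanSpace ℝ (Fin 3) → ℝ) (hφmeas : Measurable φ)
    (hφ0 : ∀ x, 0 ≤ φ x) (hφ1 : ∀ x, φ x ≤ 1)
    (hφsupp : ∀ x, 2 ≤ dist x x₀ → φ x = 0) :
    ∫ x, (φ x * ((3 * ε ^ (2 : ℕ)) ^ ((1 : ℝ) / 4) /
          (ε ^ (2 : ℕ) + dist x x₀ ^ (2 : ℕ)) ^ ((1 : ℝ) / 2))) ^ (2 : ℕ) ≤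
      8 * Real.sqrt 3 * Real.pi * ε := by
  set c : ℝ := Real.sqrt 3 * ε with hc
  have hc0 : 0 ≤ c := by positivity
  set F : EuclideanSpace ℝ (Fin 3) → ℝ := fun x => c / (ε ^ 2 + dist x x₀ ^ 2) with hFdef
  -- rewrite the integrand
  have hrw : ∀ x, (φ x * ((3 * ε ^ (2 : ℕ)) ^ ((1 : ℝ) / 4) /
          (ε ^ (2 : ℕ) + dist x x₀ ^ (2 : ℕ)) ^ ((1 : ℝ) / 2))) ^ (2 : ℕ)
      = (φ x) ^ 2 * F x := by
    intro x
    have ha : (0:ℝ) ≤ 3 * ε ^ 2 := by positivity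
    have hb : (0:ℝ) ≤ ε ^ 2 + dist x x₀ ^ 2 := by positivity
    have h1 : ((3 * ε ^ 2 : ℝ) ^ ((1 : ℝ) / 4)) ^ (2:ℕ) = Real.sqrt 3 * ε := by
      rw [← Real.rpow_natCast ((3 * ε ^ 2 : ℝ) ^ ((1 : ℝ) / 4)) 2, ← Real.rpow_mul ha]
      norm_num
      rw [← Real.sqrt_eq_rpow, Real.sqrt_mul (by norm_num), Real.sqrt_sq hε.le]
    have h2 : (((ε ^ 2 + dist x x₀ ^ 2 : ℝ)) ^ ((1 : ℝ) / 2)) ^ (2:ℕ) = ε ^ 2 + dist x x₀ ^ 2 := by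
      rw [← Real.rpow_natCast _ 2, ← Real.rpow_mul hb]
      norm_num
    rw [mul_pow, div_pow, h1, h2]
  have hFcont : Continuous F := by
    apply continuous_const.div
    · fun_prop
    · intro x; positivity
  have hF0 : ∀ x, 0 ≤ F x := fun x => by positivity
  set g : EuclideanSpace ℝ (Fin 3) → ℝ := (Metric.ball x₀ 2).indicator F with hgdef
  have hle : ∀ x, (φ x) ^ 2 * F x ≤ g x := by
    intro x
    by_cases hx : x ∈ Metric.ball x₀ 2
    · rw [hgdef, Set.indicator_of_mem hx]
      have hφsq : (φ x) ^ 2 ≤ 1 := pow_le_one₀ (hφ0 x) (hφ1 x)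
      nlinarith [hF0 x]
    · have hz : φ x = 0 := hφsupp x (by simpa [Metric.mem_ball, not_lt] using hx)
      rw [hgdef, Set.indicator_of_notMem hx, hz]
      norm_num
  have hgint : Integrable g := by
    rw [hgdef, integrable_indicator_iff measurableSet_ball]
    exact (hFcont.continuousOn.integrableOn_compact
      (isCompact_closedBall x₀ 2)).mono_set Metric.ball_subset_closedBall
  have hmeas : Measurable fun x => (φ x) ^ 2 * F x :=
    (hφmeas.pow_const 2).mul hFcont.measurable
  have hint : Integrable fun x => (φ x) ^ 2 * F x := by
    refine hgint.mono' hmeas.aestronglyMeasurable (Filter.Eventually.of_forall fun x => ?_)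
    rw [Real.norm_eq_abs, abs_of_nonneg (by positivity)]
    exact hle x
  have step1 : (∫ x, (φ x * ((3 * ε ^ (2 : ℕ)) ^ ((1 : ℝ) / 4) /
          (ε ^ (2 : ℕ) + dist x x₀ ^ (2 : ℕ)) ^ ((1 : ℝ) / 2))) ^ (2 : ℕ))
      = ∫ x, (φ x) ^ 2 * F x :=
    integral_congr_ae (Filter.Eventually.of_forall hrw)
  have step2 : (∫ x, (φ x) ^ 2 * F x) ≤ ∫ x, g x := integral_mono hint hgint hle
  -- now compute/bound ∫ g
  set f0 : ℝ → ℝ := Set.indicator (Set.Iio (2:ℝ)) (fun r => c / (ε ^ 2 + r ^ 2)) with hf0def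
  have hgf0 : ∀ x, g x = f0 (‖x - x₀‖) := by
    intro x
    by_cases hx : x ∈ Metric.ball x₀ 2
    · have hx' : ‖x - x₀‖ ∈ Set.Iio (2:ℝ) := by
        simpa [Metric.mem_ball, dist_eq_norm] using hx
      rw [hgdef, Set.indicator_of_mem hx, hf0def, Set.indicator_of_mem hx']
      simp [hFdef, dist_eq_norm]
    · have hx' : ‖x - x₀‖ ∉ Set.Iio (2:ℝ) := by
        simpa [Metric.mem_ball, dist_eq_norm] using hx
      rw [hgdef, Set.indicator_of_notMem hx, hf0def, Set.indicator_of_notMem hx']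
  have step3 : (∫ x, g x) = ∫ y : EuclideanSpace ℝ (Fin 3), f0 ‖y‖ := by
    rw [integral_congr_ae (Filter.Eventually.of_forall hgf0)]
    exact integral_sub_right_eq_self (fun y => f0 ‖y‖) x₀
  have hdim : Module.finrank ℝ (EuclideanSpace ℝ (Fin 3)) = 3 := by
    simp [finrank_euclideanSpace]
  have step4 : (∫ y : EuclideanSpace ℝ (Fin 3), f0 ‖y‖)
      = 3 * ((4 * π / 3) * ∫ r in Set.Ioi (0:ℝ), r ^ 2 * f0 r) := by
    rw [integral_fun_norm_addHaar (volume : Measure (EuclideanSpace ℝ (Fin 3))) f0, hdim,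
      measureReal_def, vol_ball3]
    simp only [nsmul_eq_mul, smul_eq_mul, Nat.cast_ofNat]
  -- bound the radial integral
  have hIioo : (∫ r in Set.Ioi (0:ℝ), r ^ 2 * f0 r)
      = ∫ r in Set.Ioo (0:ℝ) 2, r ^ 2 * (c / (ε ^ 2 + r ^ 2)) := by
    have : ∀ r : ℝ, r ^ 2 * f0 r
        = Set.indicator (Set.Iio (2:ℝ)) (fun r => r ^ 2 * (c / (ε ^ 2 + r ^ 2))) r := by
      intro r
      rw [hf0def]
      by_cases hr : r ∈ Set.Iio (2:ℝ)
      · rw [Set.indicator_of_mem hr, Set.indicator_of_mem hr]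
      · rw [Set.indicator_of_notMem hr, Set.indicator_of_notMem hr, mul_zero]
    rw [setIntegral_congr_ae measurableSet_Ioi
      (Filter.Eventually.of_forall fun r _ => this r),
      setIntegral_indicator measurableSet_Iio, Set.Ioi_inter_Iio]
  have hcont2 : Continuous fun r : ℝ => r ^ 2 * (c / (ε ^ 2 + r ^ 2)) := by
    apply Continuous.mul (by fun_prop)
    apply continuous_const.div (by fun_prop)
    intro r; positivity
  have hint2 : IntegrableOn (fun r : ℝ => r ^ 2 * (c / (ε ^ 2 + r ^ 2))) (Set.Ioo 0 2) :=
    (hcont2.continuousOn.integrableOn_compact isCompact_Icc).mono_set Set.Ioo_subset_Icc_self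
  have hbound : (∫ r in Set.Ioo (0:ℝ) 2, r ^ 2 * (c / (ε ^ 2 + r ^ 2)))
      ≤ ∫ _r in Set.Ioo (0:ℝ) 2, c := by
    refine setIntegral_mono_on hint2 (integrableOn_const ?_) measurableSet_Ioo ?_
    · rw [Real.volume_Ioo]; exact ENNReal.ofReal_lt_top.ne
    · intro r hr
      have hD : (0:ℝ) < ε ^ 2 + r ^ 2 := by positivity
      rw [mul_div_assoc' , div_le_iff₀ hD]
      nlinarith [hr.1, hr.2]
  have hconst : (∫ _r in Set.Ioo (0:ℝ) 2, c) = 2 * c := by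
    rw [setIntegral_const, measureReal_def, Real.volume_Ioo]
    norm_num
  -- combine
  rw [step1]
  calc (∫ x, (φ x) ^ 2 * F x) ≤ ∫ x, g x := step2
    _ = 3 * ((4 * π / 3) * ∫ r in Set.Ioi (0:ℝ), r ^ 2 * f0 r) := by rw [step3, step4]
    _ ≤ 3 * ((4 * π / 3) * (2 * c)) := by
        have h1 : (∫ r in Set.Ioi (0:ℝ), r ^ 2 * f0 r) ≤ 2 * c := by
          rw [hIioo]; rw [hconst] at hbound; exact hbound
        have hπ : (0:ℝ) ≤ 4 * π / 3 := by positivity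
        nlinarith [h1, hπ]
    _ = 8 * Real.sqrt 3 * π * ε := by rw [hc]; ring
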